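/- If the first order calculus is inner (but not necessarily simple) and φ is a differentiable graded automorphism, then the 1-form ϑ_φ := φ(ϑ) − ϑ commutes with every element of Ω^0, and for every homogeneous ω ∈ Ω^r one has φ(Δ(ω)) = Δ(φ(ω)) + [ϑ_φ, φ(ω)], where [ϑ_φ, η] := ϑ_φ η − (−1)^r η ϑ_φ for η ∈ Ω^r. -/
import Mathlib


/-- If the calculus is inner (not necessarily simple) and φ is a differentiable graded
    automorphism, then ϑ_φ := φ(ϑ) − ϑ commutes with Ω^0 and
    φ(Δ(ω)) = Δ(φ(ω)) + [ϑ_φ, φ(ω)] for homogeneous ω. -/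
theorem stmt_8 {k Ω : Type*} [Field k] [CharZero k] [Ring Ω] [Algebra k Ω]
    (𝒜 : ℕ → Submodule k Ω) [GradedAlgebra 𝒜]
    (d : Ω →ₗ[k] Ω)
    (hd_map : ∀ (r : ℕ), ∀ ω ∈ 𝒜 r, d ω ∈ 𝒜 (r + 1))
    (hLeibniz : ∀ (r : ℕ), ∀ ω ∈ 𝒜 r, ∀ ω' : Ω,
      d (ω * ω') = d ω * ω' + ((-1 : k) ^ r) • (ω * d ω'))
    (ϑ : Ω) (hϑ : ϑ ∈ 𝒜 1)
    (hinner : ∀ f ∈ 𝒜 0, d f = ϑ * f - f * ϑ)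
    (Δ : Ω →ₗ[k] Ω)
    (hΔ : ∀ (r : ℕ), ∀ ω ∈ 𝒜 r, Δ ω = ϑ * ω - ((-1 : k) ^ r) • (ω * ϑ) - d ω)
    (φ : Ω ≃ₐ[k] Ω)
    (hφgr : ∀ r : ℕ, (𝒜 r).map φ.toLinearMap = 𝒜 r)
    (hφd : ∀ ω : Ω, φ (d ω) = d (φ ω)) :
    (∀ f ∈ 𝒜 0, (φ ϑ - ϑ) * f = f * (φ ϑ - ϑ)) ∧
      (∀ (r : ℕ), ∀ ω ∈ 𝒜 r,
        φ (Δ ω) = Δ (φ ω) +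
          ((φ ϑ - ϑ) * φ ω - ((-1 : k) ^ r) • (φ ω * (φ ϑ - ϑ)))) := by
  have hφmem : ∀ r : ℕ, ∀ ω ∈ 𝒜 r, φ ω ∈ 𝒜 r := by
    intro r ω hω
    rw [← hφgr r]
    exact ⟨ω, hω, rfl⟩
  constructor
  · intro f hf
    -- write f = φ g
    obtain ⟨g, hg, rfl⟩ := by
      have := (hφgr 0).symm ▸ hf
      exact this
    have h1 : φ (d g) = φ ϑ * φ g - φ g * φ ϑ := by
      rw [hinner g hg, map_sub, map_mul, map_mul]
    have h2 : d (φ g) = ϑ * φ g - φ g * ϑ := hinner _ (hφmem 0 g hg)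
    have := (hφd g).symm.trans h1
    rw [h2] at this
    show (φ ϑ - ϑ) * φ g = φ g * (φ ϑ - ϑ)
    have key : φ ϑ * φ g = (ϑ * φ g - φ g * ϑ) + φ g * φ ϑ :=
      eq_add_of_sub_eq this.symm
    rw [sub_mul, mul_sub, key]
    abel
  · intro r ω hω
    have h1 : φ (Δ ω) = φ ϑ * φ ω - ((-1 : k) ^ r) • (φ ω * φ ϑ) - φ (d ω) := by
      rw [hΔ r ω hω, map_sub, map_sub, map_mul, map_smul, map_mul]
    rw [h1, hφd, hΔ r (φ ω) (hφmem r ω hω)]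
    rw [mul_sub, sub_mul, smul_sub]
    abel
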